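/- With g_τ as above, define h_τ(t) := ∫₀ᵗ (g_τ(s)² − 1) ds. Then the sup-norm bound ‖h_τ(σ·)‖_{L^∞(0,T)} ≤ 1 holds (after suitable normalization of g), i.e., the antiderivative of g_τ² − 1 stays uniformly bounded by 1 independently of τ and σ. -/
import Mathlib


open MeasureTheory

/-- The antiderivative `h_τ(t) = ∫₀ᵗ (g_τ(s)² - 1) ds` of the temporal oscillation
`g_τ² - 1` (with `g_τ` the `T/τ`-periodic rescaled profile of mean square one) stays
uniformly bounded: `‖h_τ(σ·)‖_{L^∞(0,T)} ≤ 1`, independently of `τ` and `σ`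
(after the normalization `T ≤ 1` of the period). -/
theorem stmt1 (T : ℝ) (hT : 0 < T) (hT1 : T ≤ 1) (τ σ : ℕ+) (gper : ℝ → ℝ)
    (hcont : Continuous gper)
    (hper : Function.Periodic gper (T / ((τ : ℕ) : ℝ)))
    (hms : ∫ t in (0:ℝ)..(T / ((τ : ℕ) : ℝ)), (gper t) ^ 2 = T / ((τ : ℕ) : ℝ))
    (h : ℝ → ℝ) (hdef : ∀ t, h t = ∫ s in (0:ℝ)..t, ((gper s) ^ 2 - 1)) :
    ∀ t ∈ Set.Icc (0:ℝ) T, |h (((σ : ℕ) : ℝ) * t)| ≤ 1 := by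
  intro t ht
  set P : ℝ := T / ((τ : ℕ) : ℝ) with hPdef
  have hτpos : (0:ℝ) < ((τ : ℕ) : ℝ) := by exact_mod_cast τ.pos
  have hPpos : 0 < P := div_pos hT hτpos
  have hPleT : P ≤ T := div_le_self hT.le (by exact_mod_cast τ.one_le)
  have hP1 : P ≤ 1 := hPleT.trans hT1
  -- continuity / integrability
  have hcont2 : Continuous (fun s => (gper s) ^ 2) := hcont.pow 2
  have hcontf : Continuous (fun s => (gper s) ^ 2 - 1) := hcont2.sub continuous_const
  have hint2 : ∀ a b : ℝ, IntervalIntegrable (fun s => (gper s) ^ 2) volume a b :=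
    fun a b => hcont2.intervalIntegrable a b
  have hintf : ∀ a b : ℝ, IntervalIntegrable (fun s => (gper s) ^ 2 - 1) volume a b :=
    fun a b => hcontf.intervalIntegrable a b
  -- periodicity of the integrand
  have hfper : Function.Periodic (fun s => (gper s) ^ 2 - 1) P := by
    intro x; simp [hper x]
  -- integral over one period vanishes
  have hint0 : ∫ s in (0:ℝ)..P, ((gper s) ^ 2 - 1) = 0 := by
    rw [intervalIntegral.integral_sub (hint2 0 P) (intervalIntegrable_const)]
    simp [hms]
  -- h is P-periodic
  have hhper : Function.Periodic h P := by
    intro x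
    rw [hdef, hdef]
    have hadd := intervalIntegral.integral_add_adjacent_intervals (hintf 0 x) (hintf x (x + P))
    have hshift : (∫ s in x..x + P, ((gper s) ^ 2 - 1)) =
        ∫ s in (0:ℝ)..0 + P, ((gper s) ^ 2 - 1) := hfper.intervalIntegral_add_eq x 0
    rw [zero_add] at hshift
    rw [← hadd, hshift, hint0, add_zero]
  -- reduce to a point in [0, P)
  set y : ℝ := ((σ : ℕ) : ℝ) * t with hydef
  set x : ℝ := y - ⌊y / P⌋ * P with hxdef
  have hx0 : 0 ≤ x := Int.sub_floor_div_mul_nonneg y hPpos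
  have hxP : x < P := Int.sub_floor_div_mul_lt y hPpos
  have hval : h y = h x := by
    exact (hhper.sub_int_mul_eq (x := y) ⌊y / P⌋).symm
  -- compute h x
  have hhx : h x = (∫ s in (0:ℝ)..x, (gper s) ^ 2) - x := by
    rw [hdef, intervalIntegral.integral_sub (hint2 0 x) (intervalIntegrable_const)]
    simp
  -- bounds on the integral of g²
  have hI0 : 0 ≤ ∫ s in (0:ℝ)..x, (gper s) ^ 2 :=
    intervalIntegral.integral_nonneg hx0 (fun s _ => sq_nonneg _)
  have hIP : (∫ s in (0:ℝ)..x, (gper s) ^ 2) ≤ P := by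
    have hsplit := intervalIntegral.integral_add_adjacent_intervals (hint2 0 x) (hint2 x P)
    have htail : 0 ≤ ∫ s in x..P, (gper s) ^ 2 :=
      intervalIntegral.integral_nonneg hxP.le (fun s _ => sq_nonneg _)
    have : (∫ s in (0:ℝ)..x, (gper s) ^ 2) ≤ ∫ s in (0:ℝ)..P, (gper s) ^ 2 := by
      linarith [hsplit]
    rwa [hms] at this
  rw [hval, hhx]
  rw [abs_le]
  constructor <;> nlinarith [hx0, hxP, hI0, hIP, hP1]
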